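/- Let T be a self-adjoint linear operator on a finite-dimensional complex inner product space and let P be an orthogonal projection with T P = P = P T. Let r ≥ 1 be a natural number and suppose that for every integer m ≥ 1 one has ‖T^m − P‖_HS² ≤ 2·(1 + (4/5)^{4m})^r − 2, where ‖·‖_HS is the Hilbert–Schmidt (Frobenius) norm. Then the operator norm satisfies ‖T − P‖ ≤ 16/25; equivalently, the spectral gap 1 − ‖T − P‖ is at least 9/25. -/

import Mathlib

open ContinuousLinearMap

section Helpers

variable {V : Type*} [NormedAddCommGroup V] [InnerProductSpace ℂ V] [FiniteDimensional ℂ V]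

lemma trace_adjoint_comp_re (B : V →L[ℂ] V) :
    (LinearMap.trace ℂ V (ContinuousLinearMap.adjoint B ∘L B).toLinearMap).re
      = ∑ i, ‖B (stdOrthonormalBasis ℂ V i)‖ ^ 2 := by
  set b := stdOrthonormalBasis ℂ V with hb
  rw [LinearMap.trace_eq_matrix_trace ℂ b.toBasis, Matrix.trace, Complex.re_sum]
  refine Finset.sum_congr rfl fun i _ => ?_
  rw [Matrix.diag_apply, LinearMap.toMatrix_apply, b.coe_toBasis,
    b.coe_toBasis_repr_apply, b.repr_apply_apply]
  change (inner ℂ (b i) ((ContinuousLinearMap.adjoint B) (B (b i)))).re = _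
  rw [ContinuousLinearMap.adjoint_inner_right, ← RCLike.re_to_complex]
  exact inner_self_eq_norm_sq _

lemma norm_sq_le_trace {B : V →L[ℂ] V} (hB : IsSelfAdjoint B) :
    ‖B‖ ^ 2 ≤ (LinearMap.trace ℂ V (ContinuousLinearMap.adjoint B ∘L B).toLinearMap).re := by
  rw [trace_adjoint_comp_re]
  set b := stdOrthonormalBasis ℂ V with hb
  set S := ∑ i, ‖B (b i)‖ ^ 2 with hS
  have hS0 : 0 ≤ S := Finset.sum_nonneg fun i _ => sq_nonneg _
  have key : ∀ x : V, ‖B x‖ ^ 2 ≤ S * ‖x‖ ^ 2 := by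
    intro x
    have h1 : (‖B x‖ : ℝ) ^ 2 = ∑ i, ‖(inner ℂ (b i) (B x))‖ ^ 2 := by
      have h2 := congrArg Complex.re (b.sum_inner_mul_inner (B x) (B x))
      rw [Complex.re_sum] at h2
      rw [← inner_self_eq_norm_sq (𝕜 := ℂ) (B x), RCLike.re_to_complex, ← h2]
      refine Finset.sum_congr rfl fun i _ => ?_
      rw [← inner_conj_symm (B x) (b i), Complex.conj_mul', ← Complex.ofReal_pow,
        Complex.ofReal_re]
    have h3 : ∀ i, ‖(inner ℂ (b i) (B x))‖ ^ 2 ≤ ‖B (b i)‖ ^ 2 * ‖x‖ ^ 2 := by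
      intro i
      have h4 : (inner ℂ (b i) (B x)) = inner ℂ (B (b i)) x := by
        rw [← ContinuousLinearMap.adjoint_inner_left, hB.adjoint_eq]
      rw [h4, ← mul_pow]
      exact pow_le_pow_left₀ (norm_nonneg _) (norm_inner_le_norm _ _) 2
    calc ‖B x‖ ^ 2 = ∑ i, ‖(inner ℂ (b i) (B x))‖ ^ 2 := h1
      _ ≤ ∑ i, ‖B (b i)‖ ^ 2 * ‖x‖ ^ 2 := Finset.sum_le_sum fun i _ => h3 i
      _ = S * ‖x‖ ^ 2 := by rw [← Finset.sum_mul]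
  have hnorm : ‖B‖ ≤ Real.sqrt S := by
    refine ContinuousLinearMap.opNorm_le_bound _ (Real.sqrt_nonneg _) fun x => ?_
    have h5 : ‖B x‖ ≤ Real.sqrt (S * ‖x‖ ^ 2) := by
      rw [← Real.sqrt_sq (norm_nonneg (B x))]
      exact Real.sqrt_le_sqrt (key x)
    rw [Real.sqrt_mul hS0, Real.sqrt_sq (norm_nonneg x)] at h5
    exact h5
  calc ‖B‖ ^ 2 ≤ Real.sqrt S ^ 2 := pow_le_pow_left₀ (norm_nonneg _) hnorm 2
    _ = S := Real.sq_sqrt hS0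

lemma one_add_pow_le_aux (r : ℕ) {x : ℝ} (hx0 : 0 ≤ x) (hx1 : x ≤ 1) :
    (1 + x) ^ r ≤ 1 + (2 ^ r - 1) * x := by
  induction r with
  | zero => simp
  | succ n ih =>
    have h2 : (1:ℝ) ≤ 2 ^ n := one_le_pow₀ (by norm_num)
    have hxx : x * x ≤ x * 1 := mul_le_mul_of_nonneg_left hx1 hx0
    calc (1 + x) ^ (n + 1) = (1 + x) ^ n * (1 + x) := pow_succ _ _
      _ ≤ (1 + (2 ^ n - 1) * x) * (1 + x) := by
          apply mul_le_mul_of_nonneg_right ih (by linarith)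
      _ ≤ 1 + (2 ^ (n + 1) - 1) * x := by rw [pow_succ]; nlinarith

end Helpers

/-- **Spectral gap from frame-potential bounds (abstract brickwork bound).**
Let `T` be a self-adjoint operator on a finite-dimensional complex inner product space
and `P` an orthogonal projection with `TP = P = PT`.  If for some `r ≥ 1` one has
`‖T^m − P‖²_HS ≤ 2(1 + (4/5)^{4m})^r − 2` for every `m ≥ 1` (Hilbert–Schmidt norm,
`‖A‖²_HS = Re tr(A†A)`), then the operator norm satisfies `‖T − P‖ ≤ 16/25`, i.e. the
spectral gap `1 − ‖T − P‖` is at least `9/25`. -/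
theorem spectral_gap_from_frame_potential
    {V : Type*} [NormedAddCommGroup V] [InnerProductSpace ℂ V] [FiniteDimensional ℂ V]
    (T P : V →L[ℂ] V)
    (hT_sa : IsSelfAdjoint T)
    (hP_sa : IsSelfAdjoint P) (hP_idem : P ∘L P = P)
    (hTP : T ∘L P = P) (hPT : P ∘L T = P)
    (r : ℕ) (hr : 1 ≤ r)
    (hHS : ∀ m : ℕ, 1 ≤ m →
      (LinearMap.trace ℂ V
          (ContinuousLinearMap.adjoint (T ^ m - P) ∘L (T ^ m - P)).toLinearMap).re
        ≤ 2 * (1 + (4 / 5 : ℝ) ^ (4 * m)) ^ r - 2) :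
    ‖T - P‖ ≤ 16 / 25 ∧ (9 : ℝ) / 25 ≤ 1 - ‖T - P‖ := by
  haveI : CompleteSpace V := FiniteDimensional.complete ℂ V
  have hA_sa : IsSelfAdjoint (T - P) := hT_sa.sub hP_sa
  have hTP' : T * P = P := hTP
  have hPT' : P * T = P := hPT
  have hPP : P * P = P := hP_idem
  -- T ^ m * P = P
  have hTmP : ∀ m : ℕ, T ^ m * P = P := by
    intro m
    induction m with
    | zero => simp
    | succ n ih => rw [pow_succ, mul_assoc, hTP', ih]
  -- (T - P) ^ m = T ^ m - P for m ≥ 1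
  have hpow : ∀ m : ℕ, 1 ≤ m → (T - P) ^ m = T ^ m - P := by
    intro m hm
    induction m with
    | zero => omega
    | succ n ih =>
      rcases Nat.eq_zero_or_pos n with hn | hn
      · subst hn; simp
      · have h1 : (T - P) ^ (n + 1) = (T ^ n - P) * (T - P) := by
          rw [pow_succ, ih hn]
        have h2 : (T ^ n - P) * (T - P)
            = T ^ n * T - T ^ n * P - P * T + P * P := by noncomm_ring
        rw [h1, h2, hTmP n, hPT', hPP, ← pow_succ]
        abel
  set C : ℝ := 2 * ((2:ℝ) ^ r - 1) with hC
  -- key bound at m = 2 ^ k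
  have key : ∀ k : ℕ, ‖T - P‖ ^ (2 * 2 ^ k) ≤ C * ((16:ℝ)/25) ^ (2 * 2 ^ k) := by
    intro k
    set m := 2 ^ k with hmdef
    have hm : 1 ≤ m := Nat.one_le_two_pow
    have h1 : ‖(T - P) ^ m‖ = ‖T - P‖ ^ m := by
      have := congrArg (fun t : NNReal => (t : ℝ)) (hA_sa.nnnorm_pow_two_pow k)
      push_cast at this
      exact this
    have h2 : ‖(T - P) ^ m‖ ^ 2
        ≤ (LinearMap.trace ℂ V
            (ContinuousLinearMap.adjoint (T ^ m - P) ∘L (T ^ m - P)).toLinearMap).re := by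
      rw [hpow m hm]
      exact norm_sq_le_trace (by rw [← hpow m hm]; exact hA_sa.pow m)
    have hq0 : (0:ℝ) ≤ (4/5:ℝ) ^ (4 * m) := by positivity
    have hq1 : (4/5:ℝ) ^ (4 * m) ≤ 1 := pow_le_one₀ (by norm_num) (by norm_num)
    have h3 : 2 * (1 + (4/5:ℝ) ^ (4 * m)) ^ r - 2 ≤ C * (4/5:ℝ) ^ (4 * m) := by
      have h3' := one_add_pow_le_aux r hq0 hq1
      calc 2 * (1 + (4/5:ℝ) ^ (4 * m)) ^ r - 2
          ≤ 2 * (1 + ((2:ℝ) ^ r - 1) * (4/5:ℝ) ^ (4 * m)) - 2 := by linarith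
        _ = C * (4/5:ℝ) ^ (4 * m) := by rw [hC]; ring
    have h4 : ((4:ℝ)/5) ^ (4 * m) = ((16:ℝ)/25) ^ (2 * m) := by
      have : 4 * m = 2 * (2 * m) := by ring
      rw [this, pow_mul]
      norm_num
    have h5 : ‖T - P‖ ^ (2 * m) = (‖(T - P) ^ m‖) ^ 2 := by
      rw [h1, ← pow_mul, mul_comm]
    rw [h5]
    calc (‖(T - P) ^ m‖) ^ 2 ≤ 2 * (1 + (4/5:ℝ) ^ (4 * m)) ^ r - 2 :=
          le_trans h2 (hHS m hm)
      _ ≤ C * (4/5:ℝ) ^ (4 * m) := h3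
      _ = C * ((16:ℝ)/25) ^ (2 * m) := by rw [h4]
  have hmain : ‖T - P‖ ≤ 16 / 25 := by
    by_contra h
    push_neg at h
    set t : ℝ := ‖T - P‖ * (25 / 16) with ht
    have ht1 : 1 < t := by rw [ht]; linarith
    obtain ⟨n, hn⟩ := pow_unbounded_of_one_lt C ht1
    have hle : t ^ n ≤ t ^ (2 * 2 ^ n) := by
      apply pow_le_pow_right₀ ht1.le
      have : n < 2 ^ n := Nat.lt_two_pow_self
      omega
    have hN : t ^ (2 * 2 ^ n) ≤ C := by
      have hprod : ((16:ℝ)/25) ^ (2 * 2 ^ n) * ((25:ℝ)/16) ^ (2 * 2 ^ n) = 1 := by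
        rw [← mul_pow]; norm_num
      calc t ^ (2 * 2 ^ n) = ‖T - P‖ ^ (2 * 2 ^ n) * ((25:ℝ)/16) ^ (2 * 2 ^ n) :=
            mul_pow _ _ _
        _ ≤ (C * ((16:ℝ)/25) ^ (2 * 2 ^ n)) * ((25:ℝ)/16) ^ (2 * 2 ^ n) :=
            mul_le_mul_of_nonneg_right (key n) (by positivity)
        _ = C := by rw [mul_assoc, hprod, mul_one]
    linarith
  exact ⟨hmain, by linarith⟩
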